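/- Let K be a nonnegative integer-valued, non-deterministic random variable with E[K] > 0 and E[K²] < ∞, α > 0, and suppose θ ∈ (0,1] satisfies 1 = (1/E[K])·E[K²·α/(1 + K·α·θ)]. Then θ > 1 − 1/(α·E[K]). -/

import Mathlib

open MeasureTheory

lemma tangent_eq (α θ m x : ℝ) (h1 : (1+x*α*θ) ≠ 0) (h2 : (1+m*α*θ) ≠ 0) :
    x^2*α/(1+x*α*θ) - (m^2*α/(1+m*α*θ) + α*m*(2+α*θ*m)/(1+m*α*θ)^2 * (x-m))
      = α*(x-m)^2/((1+x*α*θ)*(1+m*α*θ)^2) := by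
  rw [div_mul_eq_mul_div, div_add_div _ _ h2 (pow_ne_zero 2 h2), div_sub_div _ _ h1 (mul_ne_zero h2 (pow_ne_zero 2 h2)), div_eq_div_iff (mul_ne_zero h1 (mul_ne_zero h2 (pow_ne_zero 2 h2))) (mul_ne_zero h1 (pow_ne_zero 2 h2))]
  ring

/-- Jensen lower bound for the equilibrium: θ > 1 − 1/(αE[K]). -/
theorem equilibrium_jensen_lower_bound {Ω : Type*} [MeasureSpace Ω]
    [IsProbabilityMeasure (volume : Measure Ω)] (K : Ω → ℕ) (hK : Measurable K)
    (hmean : 0 < ∫ ω, (K ω : ℝ))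
    (hsq : Integrable (fun ω => (K ω : ℝ) ^ 2))
    (hnondet : ¬ ∃ c : ℕ, ∀ᵐ ω ∂(volume : Measure Ω), K ω = c)
    (α : ℝ) (hα : 0 < α) (θ : ℝ) (hθ : θ ∈ Set.Ioc (0:ℝ) 1)
    (heq : 1 = (1 / ∫ ω, (K ω : ℝ)) *
      ∫ ω, (K ω : ℝ) ^ 2 * α / (1 + (K ω : ℝ) * α * θ)) :
    θ > 1 - 1 / (α * ∫ ω, (K ω : ℝ)) := by
  set m := ∫ ω, (K ω : ℝ) with hmdef
  have hθ0 := hθ.1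
  have hm : 0 < m := hmean
  have hden : ∀ x : ℝ, 0 ≤ x → 0 < 1 + x * α * θ := by
    intro x hx
    have : 0 ≤ x * α * θ := by positivity
    linarith
  have hdenm : 0 < 1 + m * α * θ := hden m hm.le
  -- measurability
  have hKm : Measurable fun ω => (K ω : ℝ) :=
    (measurable_from_top : Measurable (Nat.cast : ℕ → ℝ)).comp hK
  -- integrability of K
  have hK1 : Integrable (fun ω => (K ω : ℝ)) := by
    refine (hsq.add (integrable_const 1)).mono hKm.aestronglyMeasurable
      (ae_of_all _ fun ω => ?_)
    have hx : (0:ℝ) ≤ (K ω : ℝ) := Nat.cast_nonneg _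
    simp only [Pi.add_apply, Real.norm_eq_abs]
    rw [abs_of_nonneg hx, abs_of_nonneg (by positivity)]
    nlinarith
  -- integrability of the equilibrium integrand
  have hfi : Integrable (fun ω => (K ω : ℝ)^2 * α / (1 + (K ω : ℝ) * α * θ)) := by
    refine (hsq.mul_const α).mono
      (((hKm.pow_const 2).mul_const α |>.div
        (measurable_const.add ((hKm.mul_const α).mul_const θ))).aestronglyMeasurable)
      (ae_of_all _ fun ω => ?_)
    have hx : (0:ℝ) ≤ (K ω : ℝ) := Nat.cast_nonneg _
    have hd := hden _ hx
    simp only [Real.norm_eq_abs]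
    rw [abs_of_nonneg (by positivity), abs_of_nonneg (by positivity)]
    rw [div_le_iff₀ hd]
    nlinarith [sq_nonneg (K ω : ℝ), mul_nonneg (mul_nonneg (sq_nonneg (K ω : ℝ)) hα.le)
      (mul_nonneg (mul_nonneg hx hα.le) hθ0.le)]
  -- the integral equation: ∫ f = m
  have hI : (∫ ω, (K ω : ℝ)^2 * α / (1 + (K ω : ℝ) * α * θ)) = m := by
    field_simp at heq
    linarith [heq]
  -- constants for the tangent line at m
  set c : ℝ := m^2*α/(1+m*α*θ) with hc
  set d : ℝ := α*m*(2+α*θ*m)/(1+m*α*θ)^2 with hd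
  -- the nonnegative gap function
  set g : Ω → ℝ := fun ω =>
    (K ω : ℝ)^2*α/(1+(K ω : ℝ)*α*θ) - (c + d * ((K ω : ℝ) - m)) with hg
  have hgform : ∀ ω, g ω
      = α*((K ω : ℝ)-m)^2/((1+(K ω : ℝ)*α*θ)*(1+m*α*θ)^2) := by
    intro ω
    exact tangent_eq α θ m (K ω) (hden _ (Nat.cast_nonneg _)).ne' hdenm.ne'
  have hg0 : ∀ ω, 0 ≤ g ω := by
    intro ω
    rw [hgform ω]
    have h1 := hden _ (Nat.cast_nonneg (K ω))
    positivity
  have hgint : Integrable g :=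
    hfi.sub ((integrable_const c).add ((hK1.sub (integrable_const m)).const_mul d))
  have hlin : Integrable (fun ω => c + d * ((K ω : ℝ) - m)) :=
    (integrable_const c).add ((hK1.sub (integrable_const m)).const_mul d)
  have hlin2 : Integrable (fun ω => d * ((K ω : ℝ) - m)) :=
    (hK1.sub (integrable_const m)).const_mul d
  have hsub : Integrable (fun ω => (K ω : ℝ) - m) := hK1.sub (integrable_const m)
  have hgI : ∫ ω, g ω = m - c := by
    rw [hg]
    rw [integral_sub hfi hlin, integral_add (integrable_const c) hlin2,
      integral_const_mul, integral_sub hK1 (integrable_const m)]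
    simp [hI, ← hmdef]
  -- strict inequality m > c
  have hcm : c < m := by
    rcases lt_or_ge c m with h | h
    · exact h
    · exfalso
      have hgz : ∫ ω, g ω = 0 :=
        le_antisymm (by rw [hgI]; linarith) (integral_nonneg hg0)
      have hae : ∀ᵐ ω, g ω = 0 := by
        have := (integral_eq_zero_iff_of_nonneg (fun ω => hg0 ω) hgint).mp hgz
        filter_upwards [this] with ω hω
        simpa using hω
      have haeK : ∀ᵐ ω, (K ω : ℝ) = m := by
        filter_upwards [hae] with ω hω
        rw [hgform ω] at hω
        have h1 := hden _ (Nat.cast_nonneg (K ω))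
        have h2 : α*((K ω : ℝ)-m)^2 = 0 := by
          by_contra hne
          exact hne (by field_simp at hω; nlinarith [hω])
        have : ((K ω : ℝ)-m)^2 = 0 := by
          rcases mul_eq_zero.mp h2 with h | h
          · exact absurd h hα.ne'
          · exact h
        have := pow_eq_zero_iff (n := 2) (by norm_num) |>.mp this
        linarith [sub_eq_zero.mp this]
      obtain ⟨ω₀, hω₀⟩ := haeK.exists
      exact hnondet ⟨K ω₀, by
        filter_upwards [haeK] with ω hω
        exact_mod_cast hω.trans hω₀.symm⟩
  -- conclude
  have hαm : 0 < α * m := mul_pos hα hm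
  have key : α * m < 1 + m * α * θ := by
    rw [hc, div_lt_iff₀ hdenm] at hcm
    nlinarith
  have h2 : (1 - θ) * (α * m) < 1 := by nlinarith
  have h3 : 1 - θ < 1 / (α * m) := (lt_div_iff₀ hαm).mpr h2
  linarith
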